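/- If p : ℝ^n → ℝ is a norm (positively homogeneous of degree 1, subadditive, vanishing only at 0) that is smooth away from 0, then there exists a nonzero point ξ ∈ ℝ^n at which the second differential (Hessian) of p² is nondegenerate (i.e., positive definite). -/

import Mathlib

/-- The Hessian (second differential) of `f` at `ξ`, as a bilinear form applied to `η, ν`. -/
noncomputable def hess {n : ℕ} (f : (Fin n → ℝ) → ℝ) (ξ η ν : Fin n → ℝ) : ℝ :=
  fderiv ℝ (fderiv ℝ f) ξ η ν

open Filter Topology in
private lemma second_nonneg' (h h' : ℝ → ℝ) (s : ℝ)
    (hd : ∀ᶠ t in 𝓝 (0:ℝ), HasDerivAt h (h' t) t)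
    (hd2 : HasDerivAt h' s 0)
    (hmin : ∀ t, h 0 ≤ h t) : 0 ≤ s := by
  by_contra hs
  push_neg at hs
  have hloc : IsLocalMin h 0 := Filter.Eventually.of_forall hmin
  have h'0 : h' 0 = 0 := hloc.hasDerivAt_eq_zero hd.self_of_nhds
  have hslope : Tendsto (fun t => h' t / t) (𝓝[≠] (0:ℝ)) (𝓝 s) := by
    have := hasDerivAt_iff_tendsto_slope.mp hd2
    simpa [slope_fun_def_field, h'0] using this
  have hev : ∀ᶠ t in 𝓝[≠] (0:ℝ), h' t / t < 0 := hslope.eventually_lt_const hs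
  rw [eventually_nhdsWithin_iff] at hev
  obtain ⟨ε₁, hε₁, H1⟩ := Metric.eventually_nhds_iff.mp hd
  obtain ⟨ε₂, hε₂, H2⟩ := Metric.eventually_nhds_iff.mp hev
  set δ := min ε₁ ε₂ / 2 with hδdef
  have hδ : 0 < δ := by positivity
  have hδ1 : δ < ε₁ := by
    have h1 := min_le_left ε₁ ε₂
    rw [hδdef]; linarith
  have hδ2 : δ < ε₂ := by
    have h1 := min_le_right ε₁ ε₂
    rw [hδdef]; linarith
  have hneg : ∀ t ∈ Set.Ioo (0:ℝ) δ, h' t < 0 := by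
    intro t ht
    have htd : dist t 0 < ε₂ := by
      rw [Real.dist_eq, sub_zero, abs_of_pos ht.1]; linarith [ht.2]
    have := H2 htd (by simp; exact ne_of_gt ht.1)
    have ht0 : (0:ℝ) < t := ht.1
    have ht' : h' t = t * (h' t / t) := by field_simp
    rw [ht']
    exact mul_neg_of_pos_of_neg ht0 this
  have hder : ∀ t ∈ Set.Icc (0:ℝ) δ, HasDerivAt h (h' t) t := by
    intro t ht
    apply H1
    rw [Real.dist_eq, sub_zero, abs_of_nonneg ht.1]; linarith [ht.2]
  have hanti : StrictAntiOn h (Set.Icc 0 δ) := by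
    apply strictAntiOn_of_deriv_neg (convex_Icc 0 δ)
    · exact fun t ht => (hder t ht).continuousAt.continuousWithinAt
    · intro t ht
      rw [interior_Icc] at ht
      rw [(hder t (Set.mem_Icc_of_Ioo ht)).deriv]
      exact hneg t ht
  have := hanti (Set.left_mem_Icc.mpr hδ.le) (Set.right_mem_Icc.mpr hδ.le) hδ
  exact absurd (hmin δ) (by linarith)

open Filter Topology in
private lemma line_deriv' {n : ℕ} (f : (Fin n → ℝ) → ℝ) (ξ₀ η : Fin n → ℝ)
    (hf : ContDiffAt ℝ 2 f ξ₀) :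
    (∀ᶠ t in 𝓝 (0:ℝ), HasDerivAt (fun t : ℝ => f (ξ₀ + t • η)) (fderiv ℝ f (ξ₀ + t • η) η) t) ∧
    HasDerivAt (fun t : ℝ => fderiv ℝ f (ξ₀ + t • η) η) (fderiv ℝ (fderiv ℝ f) ξ₀ η η) 0 := by
  have hc : ∀ t : ℝ, HasDerivAt (fun t : ℝ => ξ₀ + t • η) η t := fun t => by
    simpa using ((hasDerivAt_id t).smul_const η).const_add ξ₀
  have e0 : ξ₀ + (0:ℝ) • η = ξ₀ := by simp
  have hcont : Continuous (fun t : ℝ => ξ₀ + t • η) := by fun_prop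
  have hev : ∀ᶠ y in 𝓝 ξ₀, ContDiffAt ℝ 2 f y := hf.eventually (by norm_num)
  have h0 : Tendsto (fun t : ℝ => ξ₀ + t • η) (𝓝 0) (𝓝 ξ₀) := by
    have := hcont.tendsto 0
    rwa [e0] at this
  have hevt : ∀ᶠ t in 𝓝 (0:ℝ), ContDiffAt ℝ 2 f (ξ₀ + t • η) := h0.eventually hev
  constructor
  · refine hevt.mono fun t ht => ?_
    exact ((ht.differentiableAt (by norm_num)).hasFDerivAt).comp_hasDerivAt t (hc t)
  · have hf1 : ContDiffAt ℝ 1 (fderiv ℝ f) ξ₀ := hf.fderiv_right (by norm_num)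
    have hdf1 : DifferentiableAt ℝ (fderiv ℝ f) ξ₀ := hf1.differentiableAt (by norm_num)
    have h2 : HasDerivAt (fun t : ℝ => fderiv ℝ f (ξ₀ + t • η))
        (fderiv ℝ (fderiv ℝ f) ξ₀ η) 0 := by
      have hd : HasFDerivAt (fderiv ℝ f) (fderiv ℝ (fderiv ℝ f) (ξ₀ + (0:ℝ) • η))
          (ξ₀ + (0:ℝ) • η) := by
        rw [e0]; exact hdf1.hasFDerivAt
      have := hd.comp_hasDerivAt 0 (hc 0)
      rwa [e0] at this
    have := h2.clm_apply (hasDerivAt_const 0 η)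
    simpa using this

open Filter Topology

/-- If `p : ℝⁿ → ℝ` is a norm (positively 1-homogeneous, subadditive, vanishing only at `0`)
that is smooth away from `0`, then there is a nonzero point at which the Hessian of `p²`
is positive definite. -/
theorem stmt0 {n : ℕ} (hn : 1 ≤ n) (p : (Fin n → ℝ) → ℝ)
    (hnonneg : ∀ ξ, 0 ≤ p ξ)
    (hhomog : ∀ c : ℝ, 0 ≤ c → ∀ ξ, p (c • ξ) = c * p ξ)
    (hsub : ∀ ξ η, p (ξ + η) ≤ p ξ + p η)
    (hdef : ∀ ξ, p ξ = 0 → ξ = 0)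
    (hsmooth : ContDiffOn ℝ 2 p {ξ | ξ ≠ 0}) :
    ∃ ξ : Fin n → ℝ, ξ ≠ 0 ∧
      ∀ η : Fin n → ℝ, η ≠ 0 → 0 < hess (fun ζ => (p ζ) ^ 2) ξ η η := by
  -- continuity of p
  have hp0 : p 0 = 0 := by
    have := hhomog 0 le_rfl 0
    simpa using this
  set C : ℝ := ∑ i : Fin n, (p (Pi.single i 1) + p (-Pi.single i 1)) with hC
  have hCnn : 0 ≤ C := Finset.sum_nonneg fun i _ => add_nonneg (hnonneg _) (hnonneg _)
  have hbound : ∀ z, p z ≤ C * ‖z‖ := by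
    intro z
    have hz : z = ∑ i : Fin n, Pi.single i (z i) := by
      ext j; simp [Pi.single_apply]
    have hsum : ∀ (s : Finset (Fin n)), p (∑ i ∈ s, Pi.single i (z i)) ≤
        ∑ i ∈ s, p (Pi.single i (z i)) := by
      intro s
      induction s using Finset.induction with
      | empty => simp [hp0]
      | insert a s' hni ih =>
        rw [Finset.sum_insert hni, Finset.sum_insert hni]
        exact le_trans (hsub _ _) (by linarith)
    have hterm : ∀ i, p (Pi.single i (z i)) ≤ (p (Pi.single i 1) + p (-Pi.single i 1)) * ‖z‖ := by
      intro i
      have hzi : ‖z i‖ ≤ ‖z‖ := norm_le_pi_norm z i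
      rcases le_or_gt 0 (z i) with h | h
      · have : (Pi.single i (z i) : Fin n → ℝ) = (z i) • (Pi.single i 1 : Fin n → ℝ) := by
          ext j; simp [Pi.single_apply]
        rw [this, hhomog _ h]
        have := hnonneg (Pi.single i 1)
        have habs : |z i| ≤ ‖z‖ := by simpa [Real.norm_eq_abs] using hzi
        nlinarith [hnonneg (-Pi.single i 1), abs_of_nonneg h]
      · have : (Pi.single i (z i) : Fin n → ℝ) = (-(z i)) • (-(Pi.single i 1) : Fin n → ℝ) := by
          ext j; simp [Pi.single_apply]; split <;> simp
        rw [this, hhomog _ (by linarith)]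
        have habs : |z i| ≤ ‖z‖ := by simpa [Real.norm_eq_abs] using hzi
        nlinarith [hnonneg (Pi.single i 1), hnonneg (-Pi.single i 1), abs_of_neg h]
    calc p z = p (∑ i : Fin n, Pi.single i (z i)) := by rw [← hz]
      _ ≤ ∑ i : Fin n, p (Pi.single i (z i)) := hsum _
      _ ≤ ∑ i : Fin n, (p (Pi.single i 1) + p (-Pi.single i 1)) * ‖z‖ :=
          Finset.sum_le_sum fun i _ => hterm i
      _ = C * ‖z‖ := by rw [hC, Finset.sum_mul]
  have pcont : Continuous p := by
    have hlip : LipschitzWith (Real.toNNReal C) p := by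
      apply LipschitzWith.of_dist_le_mul
      intro x y
      rw [Real.dist_eq, dist_eq_norm]
      rw [abs_sub_le_iff]
      constructor
      · have h1 : p x ≤ p y + p (x - y) := by
          have := hsub y (x - y); simpa using this
        have := hbound (x - y)
        have hCc : (Real.toNNReal C : ℝ) = C := Real.coe_toNNReal C hCnn
        linarith [hCc ▸ this]
      · have h1 : p y ≤ p x + p (y - x) := by
          have := hsub x (y - x); simpa using this
        have := hbound (y - x)
        have hCc : (Real.toNNReal C : ℝ) = C := Real.coe_toNNReal C hCnn
        rw [← norm_sub_rev x y] at this
        linarith [hCc ▸ this]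
    exact hlip.continuous
  -- the minimizer on the Euclidean sphere
  set N : (Fin n → ℝ) → ℝ := fun ξ => ∑ i, ξ i ^ 2 with hN
  have hNcont : Continuous N := by fun_prop
  set S : Set (Fin n → ℝ) := {ξ | N ξ = 1} with hS
  have hSclosed : IsClosed S := isClosed_eq hNcont continuous_const
  have hSsub : S ⊆ Metric.closedBall 0 1 := by
    intro ξ hξ
    rw [Metric.mem_closedBall, dist_zero_right]
    rw [pi_norm_le_iff_of_nonneg zero_le_one]
    intro i
    have h1 : ξ i ^ 2 ≤ 1 := by
      have hs1 : ∑ j, ξ j ^ 2 = 1 := hξ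
      have h2 := Finset.single_le_sum (f := fun j => ξ j ^ 2)
        (fun j _ => sq_nonneg (ξ j)) (Finset.mem_univ i)
      exact h2.trans_eq hs1
    rw [Real.norm_eq_abs]
    nlinarith [abs_nonneg (ξ i), sq_abs (ξ i)]
  have hScompact : IsCompact S :=
    (isCompact_closedBall (0 : Fin n → ℝ) 1).of_isClosed_subset hSclosed hSsub
  have hSne : S.Nonempty := by
    refine ⟨Pi.single ⟨0, hn⟩ 1, ?_⟩
    simp only [hS, Set.mem_setOf_eq, hN, Pi.single_apply]
    rw [Finset.sum_eq_single (⟨0, hn⟩ : Fin n)]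
    · simp
    · intro b _ hb; simp [hb]
    · simp
  obtain ⟨ξ₀, hξ₀S, hmin⟩ := hScompact.exists_isMinOn hSne pcont.continuousOn
  have hNξ₀ : N ξ₀ = 1 := hξ₀S
  have hξ₀ne : ξ₀ ≠ 0 := by
    intro h; rw [h] at hNξ₀; simp [hN] at hNξ₀
  set m := p ξ₀ with hm
  have hmpos : 0 < m := by
    rcases lt_or_eq_of_le (hnonneg ξ₀) with h | h
    · exact h
    · exact absurd (hdef ξ₀ h.symm) hξ₀ne
  -- key inequality : m² N ζ ≤ p ζ ²
  have hkey : ∀ ζ, m ^ 2 * N ζ ≤ p ζ ^ 2 := by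
    intro ζ
    rcases eq_or_ne ζ 0 with rfl | hζ
    · simp only [hN]
      simp only [Pi.zero_apply, ne_eq, OfNat.ofNat_ne_zero, not_false_eq_true, zero_pow,
        Finset.sum_const_zero, mul_zero]
      positivity
    · have hNζ : 0 < N ζ := by
        obtain ⟨i, hi⟩ := Function.ne_iff.mp hζ
        have : (0:ℝ) < ζ i ^ 2 := pow_two_pos_of_ne_zero hi
        exact lt_of_lt_of_le this (Finset.single_le_sum (f := fun i => ζ i ^ 2)
          (fun j _ => sq_nonneg (ζ j)) (Finset.mem_univ i))
      set r := Real.sqrt (N ζ) with hr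
      have hrpos : 0 < r := Real.sqrt_pos.mpr hNζ
      have hr2 : r ^ 2 = N ζ := Real.sq_sqrt hNζ.le
      have huS : (r⁻¹ • ζ) ∈ S := by
        simp only [hS, Set.mem_setOf_eq, hN, Pi.smul_apply, smul_eq_mul]
        have : ∑ i, (r⁻¹ * ζ i) ^ 2 = r⁻¹ ^ 2 * ∑ i, ζ i ^ 2 := by
          rw [Finset.mul_sum]; congr 1; ext i; ring
        rw [this]
        have h2 : ∑ i, ζ i ^ 2 = r ^ 2 := hr2.symm
        rw [h2]
        field_simp
      have hpu : m ≤ p (r⁻¹ • ζ) := hmin huS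
      have hpζ : p ζ = r * p (r⁻¹ • ζ) := by
        rw [← hhomog r hrpos.le]
        congr 1
        rw [smul_smul]
        rw [mul_inv_cancel₀ hrpos.ne', one_smul]
      have hnn := hnonneg (r⁻¹ • ζ)
      calc m ^ 2 * N ζ = (r * m)^2 := by rw [← hr2]; ring
        _ ≤ (r * p (r⁻¹ • ζ))^2 := by
            nlinarith [mul_self_le_mul_self hmpos.le hpu, sq_nonneg r]
        _ = p ζ ^ 2 := by rw [← hpζ]
  -- main argument
  refine ⟨ξ₀, hξ₀ne, fun η hη => ?_⟩
  set f : (Fin n → ℝ) → ℝ := fun ζ => p ζ ^ 2 with hfdef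
  have hfC2 : ContDiffAt ℝ 2 f ξ₀ := by
    have hpC2 : ContDiffAt ℝ 2 p ξ₀ :=
      hsmooth.contDiffAt (IsOpen.mem_nhds isOpen_ne hξ₀ne)
    exact hpC2.pow 2
  obtain ⟨hA, hB⟩ := line_deriv' f ξ₀ η hfC2
  set h : ℝ → ℝ := fun t => f (ξ₀ + t • η) - m^2 * ∑ i, (ξ₀ i + t * η i)^2 with hhdef
  set h' : ℝ → ℝ :=
    fun t => fderiv ℝ f (ξ₀ + t • η) η - m^2 * ∑ i, (2 * (ξ₀ i + t * η i) * η i) with hh'def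
  have hbase : ∀ (t : ℝ) (i : Fin n), HasDerivAt (fun t : ℝ => ξ₀ i + t * η i) (η i) t :=
    fun t i => (hasDerivAt_mul_const (η i)).const_add (ξ₀ i)
  have hPt : ∀ t : ℝ, HasDerivAt (fun t : ℝ => ∑ i, (ξ₀ i + t * η i)^2)
      (∑ i, 2 * (ξ₀ i + t * η i) * η i) t := by
    intro t
    have := HasDerivAt.fun_sum (u := Finset.univ)
      (fun i _ => ((hbase t i).pow 2))
    refine this.congr_deriv ?_
    apply Finset.sum_congr rfl
    intro i _
    push_cast
    ring
  have hP't : HasDerivAt (fun t : ℝ => ∑ i, 2 * (ξ₀ i + t * η i) * η i)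
      (∑ i, 2 * η i * η i) 0 := by
    have := HasDerivAt.fun_sum (u := Finset.univ)
      (fun i (_ : i ∈ Finset.univ) => (((hbase 0 i).const_mul 2).mul_const (η i)))
    convert this using 1
  have hd : ∀ᶠ t in 𝓝 (0:ℝ), HasDerivAt h (h' t) t :=
    hA.mono fun t ht => ht.sub ((hPt t).const_mul (m^2))
  have hd2 : HasDerivAt h' (fderiv ℝ (fderiv ℝ f) ξ₀ η η - m^2 * ∑ i, 2 * η i * η i) 0 :=
    hB.sub (hP't.const_mul (m^2))
  have hmin' : ∀ t, h 0 ≤ h t := by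
    intro t
    have h0eq : h 0 = 0 := by
      simp only [hhdef, hfdef]
      have e1 : ξ₀ + (0:ℝ) • η = ξ₀ := by simp
      rw [e1]
      have e2 : ∑ i, (ξ₀ i + 0 * η i)^2 = N ξ₀ := by
        simp [hN]
      rw [e2, hNξ₀, ← hm]
      ring
    rw [h0eq]
    have hk := hkey (ξ₀ + t • η)
    have e3 : N (ξ₀ + t • η) = ∑ i, (ξ₀ i + t * η i)^2 := by
      simp [hN, Pi.add_apply, Pi.smul_apply, smul_eq_mul]
    rw [e3] at hk
    simp only [hhdef, hfdef]
    linarith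
  have hs := second_nonneg' h h' _ hd hd2 hmin'
  have hsumpos : 0 < ∑ i, 2 * η i * η i := by
    obtain ⟨i, hi⟩ := Function.ne_iff.mp hη
    apply Finset.sum_pos' (fun j _ => by nlinarith [mul_self_nonneg (η j)])
    exact ⟨i, Finset.mem_univ i, by nlinarith [mul_self_nonneg (η i), mul_self_pos.mpr hi]⟩
  have hm2 : 0 < m^2 * ∑ i, 2 * η i * η i := mul_pos (pow_pos hmpos 2) hsumpos
  show 0 < hess f ξ₀ η η
  unfold hess
  linarith
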